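/- Let ν, z ∈ ℂ with Re ν > 0. Then (∫₀^∞ e^(−z·t − t²/2) t^(ν−1) dt)² = 2 · ∫₀^∞ ∫₀^1 x^(2ν−1) · e^(−2·z·x − 2x² + x²·t) · t^(ν−1) · (1−t)^(−1/2) dt dx. (This is eq. (34) of Theorem 3: e^(z²/2)·D₋ν(z)² = (2^(2ν)/Γ(2ν)) ∫₀^∞ x^(2ν−1) e^(−2zx−2x²) Φ(ν, ν+1/2; x²) dx, written with Φ replaced by its Euler integral and D₋ν by its Laplace-integral representation, after simplification by the Gamma duplication formula.) -/

import Mathlib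

open MeasureTheory Complex Set

noncomputable section

lemma aux_integrableOn (ν z : ℂ) (hν : 0 < ν.re) :
    IntegrableOn (fun t : ℝ => Complex.exp (-z * t - (t:ℂ)^2 / 2) * (t:ℂ) ^ (ν - 1)) (Ioi 0) := by
  have hmeas : AEStronglyMeasurable
      (fun t : ℝ => Complex.exp (-z * t - (t:ℂ)^2 / 2) * (t:ℂ) ^ (ν - 1))
      (volume.restrict (Ioi 0)) := by
    apply ContinuousOn.aestronglyMeasurable ?_ measurableSet_Ioi
    apply ContinuousOn.mul
    · exact (Complex.continuous_exp.comp (by fun_prop)).continuousOn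
    · intro t ht
      exact (Complex.continuousAt_ofReal_cpow_const t (ν - 1)
        (Or.inr (ne_of_gt ht))).continuousWithinAt
  have hint : IntegrableOn
      (fun t : ℝ => Real.exp (z.re ^ 2) * (t ^ (ν.re - 1) * Real.exp (-(1/4) * t ^ 2)))
      (Ioi 0) :=
    (integrableOn_rpow_mul_exp_neg_mul_sq (by norm_num) (by linarith)).const_mul _
  refine hint.mono' hmeas ?_
  rw [ae_restrict_iff' measurableSet_Ioi]
  filter_upwards with t ht
  have ht' : (0:ℝ) < t := ht
  rw [norm_mul, Complex.norm_exp,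
    Complex.norm_cpow_eq_rpow_re_of_pos ht']
  have hre : (-z * t - (t:ℂ)^2 / 2).re = -(z.re * t) - t^2/2 := by
    simp [Complex.sub_re, Complex.mul_re, Complex.div_re, Complex.ofReal_re, Complex.ofReal_im,
      Complex.normSq, pow_two]
  rw [hre, Complex.sub_re, Complex.one_re]
  have h1 : Real.exp (-(z.re * t) - t^2/2) ≤ Real.exp (z.re^2) * Real.exp (-(1/4) * t^2) := by
    rw [← Real.exp_add]
    apply Real.exp_le_exp.2
    nlinarith [sq_nonneg (z.re + t/2)]
  calc Real.exp (-(z.re * t) - t^2/2) * t ^ (ν.re - 1)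
      ≤ (Real.exp (z.re^2) * Real.exp (-(1/4) * t^2)) * t ^ (ν.re - 1) := by
        apply mul_le_mul_of_nonneg_right h1 (Real.rpow_nonneg ht'.le _)
    _ = Real.exp (z.re ^ 2) * (t ^ (ν.re - 1) * Real.exp (-(1/4) * t ^ 2)) := by ring

def covMap (p : ℝ × ℝ) : ℝ × ℝ :=
  (p.1 * (1 + Real.sqrt (1 - p.2)), p.1 * (1 - Real.sqrt (1 - p.2)))

def covB (p : ℝ × ℝ) : ℝ × ℝ →L[ℝ] ℝ × ℝ :=
  LinearMap.toContinuousLinearMap (Matrix.toLin (Module.Basis.finTwoProd ℝ) (Module.Basis.finTwoProd ℝ)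
    !![1 + Real.sqrt (1 - p.2), p.1 * (-(1 / (2 * Real.sqrt (1 - p.2))));
       1 - Real.sqrt (1 - p.2), -(p.1 * (-(1 / (2 * Real.sqrt (1 - p.2)))))])

lemma covB_det (p : ℝ × ℝ) (h : 0 < 1 - p.2) :
    (covB p).det = p.1 / Real.sqrt (1 - p.2) := by
  have hw : Real.sqrt (1 - p.2) ≠ 0 := by positivity
  simp only [covB, LinearMap.det_toContinuousLinearMap, LinearMap.det_toLin,
    Matrix.det_fin_two_of]
  field_simp
  ring

lemma hasFDerivAt_covMap (p : ℝ × ℝ) (h : p.2 < 1) :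
    HasFDerivAt covMap (covB p) p := by
  have hne : 1 - p.2 ≠ 0 := by linarith
  have hs : HasDerivAt (fun t : ℝ => Real.sqrt (1 - t))
      (-(1 / (2 * Real.sqrt (1 - p.2)))) p.2 := by
    have h1 : HasDerivAt (fun t : ℝ => 1 - t) (-1) p.2 := by
      simpa using (hasDerivAt_id p.2).const_sub 1
    have h2 := (Real.hasDerivAt_sqrt hne).comp p.2 h1
    rw [show -(1 / (2 * Real.sqrt (1 - p.2))) = 1 / (2 * Real.sqrt (1 - p.2)) * -1 by ring]
    exact h2
  have h1 : HasDerivAt (fun t : ℝ => 1 + Real.sqrt (1 - t))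
      (-(1 / (2 * Real.sqrt (1 - p.2)))) p.2 := hs.const_add 1
  have h2 : HasDerivAt (fun t : ℝ => 1 - Real.sqrt (1 - t))
      (1 / (2 * Real.sqrt (1 - p.2))) p.2 := by
    simpa using hs.const_sub 1
  rw [covB, Matrix.toLin_finTwoProd_toContinuousLinearMap]
  refine HasFDerivAt.congr_fderiv ((hasFDerivAt_fst.mul (h1.comp_hasFDerivAt p hasFDerivAt_snd)).prodMk
    (hasFDerivAt_fst.mul (h2.comp_hasFDerivAt p (hasFDerivAt_snd (𝕜 := ℝ) (p := p))))) ?_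
  · apply ContinuousLinearMap.ext
    intro q
    simp [smul_smul, mul_comm]
    exact ⟨by ring, by ring⟩

lemma covMap_image :
    covMap '' (Ioi (0:ℝ) ×ˢ Ioo (0:ℝ) 1) = {p : ℝ × ℝ | 0 < p.2} ∩ {p : ℝ × ℝ | p.2 < p.1} := by
  ext pq
  constructor
  · rintro ⟨⟨x, t⟩, ⟨hx, ht0, ht1⟩, rfl⟩
    have hx' : (0:ℝ) < x := hx
    have ht0' : (0:ℝ) < t := ht0
    have ht1' : t < 1 := ht1
    have hw0 : 0 < Real.sqrt (1 - t) := Real.sqrt_pos.2 (by linarith)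
    have hwsq : Real.sqrt (1 - t) ^ 2 = 1 - t := Real.sq_sqrt (by linarith)
    have hw1 : Real.sqrt (1 - t) < 1 := by nlinarith
    constructor
    · show 0 < (covMap (x, t)).2
      simp only [covMap]
      nlinarith
    · show (covMap (x, t)).2 < (covMap (x, t)).1
      simp only [covMap]
      nlinarith
  · rintro ⟨hq, hqp⟩
    set p := pq.1 with hp
    set q := pq.2 with hqd
    have hq' : (0:ℝ) < q := hq
    have hqp' : q < p := hqp
    have hpq : (0:ℝ) < p + q := by linarith
    have hne : p + q ≠ 0 := hpq.ne'
    set r : ℝ := (p - q) / (p + q) with hr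
    have hr0 : 0 < r := div_pos (by linarith) hpq
    have hr1 : r < 1 := (div_lt_one hpq).2 (by linarith)
    refine ⟨((p + q) / 2, 1 - r ^ 2), ⟨?_, ?_⟩, ?_⟩
    · show (p + q) / 2 ∈ Ioi (0:ℝ)
      simp only [mem_Ioi]; positivity
    · show 1 - r ^ 2 ∈ Ioo (0:ℝ) 1
      constructor <;> nlinarith
    · have hsq : Real.sqrt (1 - (1 - r ^ 2)) = r := by
        rw [show 1 - (1 - r ^ 2) = r ^ 2 by ring, Real.sqrt_sq hr0.le]
      have hxr : (p + q) / 2 * r = (p - q) / 2 := by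
        rw [hr]; field_simp
      have e1 : (p + q) / 2 * (1 + r) = (p + q) / 2 + (p + q) / 2 * r := by ring
      have e2 : (p + q) / 2 * (1 - r) = (p + q) / 2 - (p + q) / 2 * r := by ring
      have : covMap ((p + q) / 2, 1 - r ^ 2) = (p, q) := by
        simp only [covMap, hsq, Prod.mk.injEq]
        constructor <;> linarith [hxr, e1, e2]
      rw [this, hp, hqd]

lemma covMap_injOn : InjOn covMap (Ioi (0:ℝ) ×ˢ Ioo (0:ℝ) 1) := by
  rintro ⟨x, t⟩ ⟨hx, ht0, ht1⟩ ⟨x', t'⟩ ⟨hx', ht0', ht1'⟩ h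
  have hx1 : (0:ℝ) < x := hx
  have hx1' : (0:ℝ) < x' := hx'
  have ht1a : t < 1 := ht1
  have ht1b : t' < 1 := ht1'
  simp only [covMap, Prod.mk.injEq] at h
  obtain ⟨h1, h2⟩ := h
  have hxx : x = x' := by linear_combination (h1 + h2) / 2
  subst hxx
  have hww : Real.sqrt (1 - t) = Real.sqrt (1 - t') := by
    have h3 : 1 + Real.sqrt (1 - t) = 1 + Real.sqrt (1 - t') := mul_left_cancel₀ hx1.ne' h1
    linarith
  have hwsq : Real.sqrt (1 - t) ^ 2 = 1 - t := Real.sq_sqrt (by linarith)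
  have hwsq' : Real.sqrt (1 - t') ^ 2 = 1 - t' := Real.sq_sqrt (by linarith)
  have : t = t' := by rw [hww] at hwsq; linarith [hwsq, hwsq']
  simp [this]

lemma diag_null : volume {p : ℝ × ℝ | p.1 = p.2} = 0 := by
  have h : {p : ℝ × ℝ | p.1 = p.2} =
      (LinearMap.ker (LinearMap.fst ℝ ℝ ℝ - LinearMap.snd ℝ ℝ ℝ) : Set (ℝ × ℝ)) := by
    ext p
    simp [LinearMap.mem_ker, sub_eq_zero]
  rw [h]
  apply Measure.addHaar_submodule
  intro htop
  have h1 : ((1:ℝ), (0:ℝ)) ∈ LinearMap.ker (LinearMap.fst ℝ ℝ ℝ - LinearMap.snd ℝ ℝ ℝ) := by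
    rw [htop]; trivial
  rw [LinearMap.mem_ker] at h1
  simp at h1

lemma covMap_pointwise (ν z : ℂ) {x t : ℝ} (hx : 0 < x) (ht0 : 0 < t) (ht1 : t < 1) :
    (x / Real.sqrt (1 - t)) •
      (Complex.exp (-z * ((x * (1 + Real.sqrt (1 - t)) : ℝ) : ℂ) -
          ((x * (1 + Real.sqrt (1 - t)) : ℝ) : ℂ) ^ 2 / 2) *
        ((x * (1 + Real.sqrt (1 - t)) : ℝ) : ℂ) ^ (ν - 1) *
       (Complex.exp (-z * ((x * (1 - Real.sqrt (1 - t)) : ℝ) : ℂ) -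
          ((x * (1 - Real.sqrt (1 - t)) : ℝ) : ℂ) ^ 2 / 2) *
        ((x * (1 - Real.sqrt (1 - t)) : ℝ) : ℂ) ^ (ν - 1))) =
    (x:ℂ) ^ (2 * ν - 1) *
      Complex.exp (-2 * z * x - 2 * (x:ℂ)^2 + (x:ℂ)^2 * t) *
      (t:ℂ) ^ (ν - 1) * ((1:ℂ) - (t:ℂ)) ^ (-(1:ℂ)/2) := by
  set w := Real.sqrt (1 - t) with hw
  have hw0 : 0 < w := Real.sqrt_pos.2 (by linarith)
  have hwsq : w ^ 2 = 1 - t := Real.sq_sqrt (by linarith)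
  have hw1 : w < 1 := by nlinarith
  have hxC : (x:ℂ) ≠ 0 := ofReal_ne_zero.2 hx.ne'
  have ha : (0:ℝ) ≤ x * (1 + w) := by nlinarith
  have hb : (0:ℝ) ≤ x * (1 - w) := by nlinarith
  have hwC : ((w:ℝ):ℂ) ^ 2 = 1 - (t:ℂ) := by
    rw [← Complex.ofReal_pow, hwsq]; push_cast; ring
  have hexp : Complex.exp (-z * ((x * (1 + w) : ℝ) : ℂ) - ((x * (1 + w) : ℝ) : ℂ) ^ 2 / 2) *
      Complex.exp (-z * ((x * (1 - w) : ℝ) : ℂ) - ((x * (1 - w) : ℝ) : ℂ) ^ 2 / 2) =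
      Complex.exp (-2 * z * x - 2 * (x:ℂ)^2 + (x:ℂ)^2 * t) := by
    rw [← Complex.exp_add]
    congr 1
    push_cast
    linear_combination (-(x:ℂ)^2) * hwC
  have hab : (x * (1 + w)) * (x * (1 - w)) = (x * x) * t := by
    linear_combination (-(x^2)) * hwsq
  have hpow : ((x * (1 + w) : ℝ) : ℂ) ^ (ν - 1) * ((x * (1 - w) : ℝ) : ℂ) ^ (ν - 1) =
      (x:ℂ) ^ (ν - 1) * (x:ℂ) ^ (ν - 1) * (t:ℂ) ^ (ν - 1) := by
    rw [← mul_cpow_ofReal_nonneg ha hb, ← Complex.ofReal_mul, hab, Complex.ofReal_mul,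
      mul_cpow_ofReal_nonneg (mul_nonneg hx.le hx.le) ht0.le, Complex.ofReal_mul,
      mul_cpow_ofReal_nonneg hx.le hx.le]
  have hxpow : (x:ℂ) * ((x:ℂ) ^ (ν - 1) * (x:ℂ) ^ (ν - 1)) = (x:ℂ) ^ (2 * ν - 1) := by
    have h1 := Complex.cpow_add (ν - 1) (ν - 1) hxC
    have h2 := Complex.cpow_add 1 ((ν - 1) + (ν - 1)) hxC
    rw [Complex.cpow_one, h1] at h2
    rw [← h2]
    congr 1
    ring
  have hwinv : ((w:ℝ):ℂ)⁻¹ = ((1:ℂ) - (t:ℂ)) ^ (-(1:ℂ)/2) := by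
    have h2 : (1 - t) ^ (-(1/2) : ℝ) = w⁻¹ := by
      rw [Real.rpow_neg (by linarith)]
      congr 1
      rw [hw, Real.sqrt_eq_rpow]
    rw [show ((1:ℂ) - (t:ℂ)) = ((1 - t : ℝ):ℂ) by push_cast; ring,
      show (-(1:ℂ)/2) = ((-(1/2) : ℝ):ℂ) by norm_num,
      ← Complex.ofReal_cpow (by linarith : (0:ℝ) ≤ 1 - t), h2, Complex.ofReal_inv]
  rw [Complex.real_smul, Complex.ofReal_div, div_eq_mul_inv, hwinv]
  linear_combination ((x:ℂ) * (((1:ℂ) - (t:ℂ)) ^ (-(1:ℂ)/2)) *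
      (((x * (1 + w) : ℝ) : ℂ) ^ (ν - 1) * ((x * (1 - w) : ℝ) : ℂ) ^ (ν - 1))) * hexp +
    ((x:ℂ) * (((1:ℂ) - (t:ℂ)) ^ (-(1:ℂ)/2)) *
      Complex.exp (-2 * z * x - 2 * (x:ℂ)^2 + (x:ℂ)^2 * t)) * hpow +
    ((((1:ℂ) - (t:ℂ)) ^ (-(1:ℂ)/2)) *
      Complex.exp (-2 * z * x - 2 * (x:ℂ)^2 + (x:ℂ)^2 * t) * (t:ℂ) ^ (ν - 1)) * hxpow

end

/-- Theorem 3, eq. (34): `e^(z²/2) D₋ν(z)² = (2^(2ν)/Γ(2ν)) ∫₀^∞ x^(2ν-1) e^(-2zx-2x²)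
Φ(ν, ν+1/2; x²) dx`, with Φ replaced by its Euler integral and D₋ν by its
Laplace-integral representation, after simplification by the Gamma duplication formula. -/
theorem square_parabolic_cylinder_phi_integral
    (ν z : ℂ) (hν : 0 < ν.re) :
    (∫ t in Ioi (0:ℝ), Complex.exp (-z * t - (t:ℂ)^2 / 2) * (t:ℂ) ^ (ν - 1)) ^ 2 =
    2 * ∫ x in Ioi (0:ℝ), ∫ t in Ioo (0:ℝ) 1,
        (x:ℂ) ^ (2 * ν - 1) *
          Complex.exp (-2 * z * x - 2 * (x:ℂ)^2 + (x:ℂ)^2 * t) *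
          (t:ℂ) ^ (ν - 1) * ((1:ℂ) - (t:ℂ)) ^ (-(1:ℂ)/2) := by
  have hf_int : IntegrableOn (fun t : ℝ => Complex.exp (-z * t - (t:ℂ)^2 / 2) * (t:ℂ) ^ (ν - 1))
      (Ioi 0) := aux_integrableOn ν z hν
  set f : ℝ → ℂ := fun t : ℝ => Complex.exp (-z * t - (t:ℂ)^2 / 2) * (t:ℂ) ^ (ν - 1) with hfdef
  set F : ℝ × ℝ → ℂ := fun p => f p.1 * f p.2 with hFdef
  set I : ℝ × ℝ → ℂ := fun p => (p.1:ℂ) ^ (2 * ν - 1) *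
    Complex.exp (-2 * z * p.1 - 2 * (p.1:ℂ)^2 + (p.1:ℂ)^2 * p.2) *
    (p.2:ℂ) ^ (ν - 1) * ((1:ℂ) - (p.2:ℂ)) ^ (-(1:ℂ)/2) with hIdef
  set Q : Set (ℝ × ℝ) := Ioi (0:ℝ) ×ˢ Ioi (0:ℝ) with hQdef
  set T : Set (ℝ × ℝ) := {p : ℝ × ℝ | 0 < p.2} ∩ {p : ℝ × ℝ | p.2 < p.1} with hTdef
  set T' : Set (ℝ × ℝ) := {p : ℝ × ℝ | 0 < p.1} ∩ {p : ℝ × ℝ | p.1 < p.2} with hT'def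
  set S : Set (ℝ × ℝ) := Ioi (0:ℝ) ×ˢ Ioo (0:ℝ) 1 with hSdef
  have hT_meas : MeasurableSet T :=
    ((isOpen_lt continuous_const continuous_snd).inter
      (isOpen_lt continuous_snd continuous_fst)).measurableSet
  have hT'_meas : MeasurableSet T' :=
    ((isOpen_lt continuous_const continuous_fst).inter
      (isOpen_lt continuous_fst continuous_snd)).measurableSet
  have hS_meas : MeasurableSet S := measurableSet_Ioi.prod measurableSet_Ioo
  have hTQ : T ⊆ Q := fun p hp => ⟨mem_Ioi.2 (lt_trans hp.1 hp.2), hp.1⟩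
  have hT'Q : T' ⊆ Q := fun p hp => ⟨hp.1, mem_Ioi.2 (lt_trans hp.1 hp.2)⟩
  have hFQ : IntegrableOn F Q := by
    rw [hQdef, IntegrableOn, Measure.volume_eq_prod, ← Measure.prod_restrict]
    exact Integrable.mul_prod hf_int hf_int
  have stepA : (∫ t in Ioi (0:ℝ), f t) ^ 2 = ∫ p in Q, F p := by
    have h0 : ∫ p in Q, F p = ∫ p in Q, f p.1 * f p.2 := rfl
    rw [h0, hQdef, Measure.volume_eq_prod, ← Measure.prod_restrict, integral_prod_mul, sq]
  have hdisj : Disjoint T T' := by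
    rw [Set.disjoint_left]
    rintro p ⟨h1, h2⟩ ⟨h3, h4⟩
    have h2' : p.2 < p.1 := h2
    have h4' : p.1 < p.2 := h4
    linarith
  have hae : (Q : Set (ℝ × ℝ)) =ᵐ[(volume : Measure (ℝ × ℝ))] ((T ∪ T' : Set (ℝ × ℝ))) := by
    rw [MeasureTheory.ae_eq_set]
    constructor
    · apply measure_mono_null ?_ diag_null
      rintro p ⟨hpQ, hn⟩
      simp only [hTdef, hT'def, mem_union, mem_inter_iff, mem_setOf_eq, not_or, not_and,
        not_lt] at hn
      have h1 : 0 < p.1 := hpQ.1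
      have h2 : 0 < p.2 := hpQ.2
      exact le_antisymm (hn.1 h2) (hn.2 h1)
    · have hsub : (T ∪ T') \ Q = ∅ := by
        rw [diff_eq_empty]
        exact union_subset hTQ hT'Q
      rw [hsub]
      simp
  have hsplit : ∫ p in Q, F p = (∫ p in T, F p) + ∫ p in T', F p := by
    rw [setIntegral_congr_set hae,
      setIntegral_union hdisj hT'_meas (hFQ.mono_set hTQ) (hFQ.mono_set hT'Q)]
  have hswap : ∫ p in T', F p = ∫ p in T, F p := by
    have hTT' : T' = Prod.swap '' T := by
      rw [Set.image_swap_eq_preimage_swap]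
      ext p
      simp only [hTdef, hT'def, mem_inter_iff, mem_setOf_eq, mem_preimage, Prod.fst_swap,
        Prod.snd_swap]
    rw [hTT', Measure.volume_eq_prod,
      (Measure.measurePreserving_swap (μ := volume) (ν := volume)).setIntegral_image_emb
        MeasurableEquiv.prodComm.measurableEmbedding F T,
      ← Measure.volume_eq_prod]
    apply setIntegral_congr_fun hT_meas
    intro p hp
    exact mul_comm (f p.2) (f p.1)
  have hderiv : ∀ p ∈ S, HasFDerivWithinAt covMap (covB p) S p := fun p hp =>
    (hasFDerivAt_covMap p hp.2.2).hasFDerivWithinAt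
  have hCoV : ∫ p in T, F p = ∫ p in S, |(covB p).det| • F (covMap p) := by
    rw [hTdef, hSdef, ← covMap_image]
    exact integral_image_eq_integral_abs_det_fderiv_smul volume hS_meas hderiv covMap_injOn F
  have hIntT : IntegrableOn F (covMap '' (Ioi (0:ℝ) ×ˢ Ioo (0:ℝ) 1)) := by
    rw [covMap_image]
    exact hFQ.mono_set hTQ
  have hIntS : IntegrableOn (fun p => |(covB p).det| • F (covMap p)) S :=
    (integrableOn_image_iff_integrableOn_abs_det_fderiv_smul volume hS_meas hderiv
      covMap_injOn F).1 hIntT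
  have hpt : ∀ p ∈ S, |(covB p).det| • F (covMap p) = I p := by
    rintro ⟨x, t⟩ ⟨hx, ht0, ht1⟩
    have hx' : (0:ℝ) < x := hx
    have ht0' : (0:ℝ) < t := ht0
    have ht1' : t < 1 := ht1
    have hdet : (covB (x, t)).det = x / Real.sqrt (1 - t) :=
      covB_det (x, t) (by show (0:ℝ) < 1 - t; linarith)
    have habs : |(covB (x, t)).det| = x / Real.sqrt (1 - t) := by
      rw [hdet]
      exact abs_of_pos (div_pos hx' (Real.sqrt_pos.2 (by linarith)))
    rw [habs]
    exact covMap_pointwise ν z hx' ht0' ht1'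
  have hIS : IntegrableOn I S := hIntS.congr_fun hpt hS_meas
  have hFub : ∫ p in S, I p = ∫ x in Ioi (0:ℝ), ∫ t in Ioo (0:ℝ) 1, I (x, t) := by
    rw [hSdef, Measure.volume_eq_prod, ← Measure.prod_restrict]
    refine (integral_integral (f := fun x t => I (x, t)) ?_).symm
    rw [Measure.prod_restrict, ← Measure.volume_eq_prod]
    exact hIS
  calc (∫ t in Ioi (0:ℝ), f t) ^ 2
      = ∫ p in Q, F p := stepA
    _ = (∫ p in T, F p) + ∫ p in T', F p := hsplit
    _ = 2 * ∫ p in T, F p := by rw [hswap]; ring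
    _ = 2 * ∫ p in S, |(covB p).det| • F (covMap p) := by rw [hCoV]
    _ = 2 * ∫ p in S, I p := by rw [setIntegral_congr_fun hS_meas hpt]
    _ = 2 * ∫ x in Ioi (0:ℝ), ∫ t in Ioo (0:ℝ) 1, I (x, t) := by rw [hFub]
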